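/- arXiv:1402.3383 — 3 statements merged into one kernel-verified Lean document; each statement's English description precedes it below -/
import Mathlib

section
/- (Combinatorial Nullstellensatz, ANR form) Let A_1, ..., A_n be nonempty finite subsets of a field F and P ∈ F[x_1,...,x_n] a nonzero polynomial with deg P ≤ Σ_j(|A_j| − 1). If the coefficient of x_1^{|A_1|−1}···x_n^{|A_n|−1} in P(x_1,...,x_n)·(x_1 + ... + x_n)^{Σ_j(|A_j|−1) − deg P} is nonzero, then |{a_1 + ... + a_n : a_j ∈ A_j, P(a_1,...,a_n) ≠ 0}| ≥ Σ_j(|A_j| − 1) − deg P + 1. -/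
open Finset MvPolynomial

section Aux
open Polynomial
variable {F : Type*} [Field F] [DecidableEq F]

lemma basis_eq (s : Finset F) (i : F) :
    Lagrange.basis s id i =
      Polynomial.C (∏ j ∈ s.erase i, (i - j)⁻¹) * Lagrange.nodal (s.erase i) id := by
  rw [Lagrange.basis, Lagrange.nodal, map_prod, ← prod_mul_distrib]
  rfl

lemma lagrange_weight_pow (s : Finset F) (t : ℕ) (ht : t < s.card) :
    ∑ a ∈ s, a ^ t * ∏ b ∈ s.erase a, (a - b)⁻¹ = if t = s.card - 1 then 1 else 0 := by
  have hinj : Set.InjOn id (s : Set F) := fun _ _ _ _ h => h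
  have h1 : ((Polynomial.X : F[X]) ^ t) =
      Lagrange.interpolate s id fun i => ((Polynomial.X : F[X]) ^ t).eval (id i) :=
    Lagrange.eq_interpolate hinj
      (by simpa [Polynomial.degree_X_pow] using (WithBot.coe_lt_coe.2 ht))
  have h2 := congrArg (fun p : F[X] => p.coeff (s.card - 1)) h1
  simp only [Lagrange.interpolate_apply, Polynomial.finset_sum_coeff] at h2
  rw [Polynomial.coeff_X_pow] at h2
  have h3 : ∀ a ∈ s,
      (Polynomial.C (((Polynomial.X : F[X]) ^ t).eval (id a)) *
        Lagrange.basis s id a).coeff (s.card - 1)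
      = a ^ t * ∏ b ∈ s.erase a, (a - b)⁻¹ := by
    intro a ha
    rw [basis_eq, ← mul_assoc, ← Polynomial.C_mul, Polynomial.coeff_C_mul]
    have hc : (Lagrange.nodal (s.erase a) id).coeff (s.card - 1) = 1 := by
      have hnd : (Lagrange.nodal (s.erase a) id).natDegree = s.card - 1 := by
        rw [Lagrange.natDegree_nodal, card_erase_of_mem ha]
      rw [← hnd]
      exact Lagrange.nodal_monic.coeff_natDegree
    rw [hc, Polynomial.eval_pow, Polynomial.eval_X]
    simp [mul_comm]
  rw [Finset.sum_congr rfl h3] at h2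
  rw [← h2]
  by_cases h : t = s.card - 1 <;> simp [h, eq_comm]

lemma coeff_formula {n : ℕ} (A : Fin n → Finset F) (hA : ∀ j, (A j).Nonempty)
    (Q : MvPolynomial (Fin n) F) (hQ : Q.totalDegree ≤ ∑ j, ((A j).card - 1)) :
    MvPolynomial.coeff (Finsupp.equivFunOnFinite.symm fun j => (A j).card - 1) Q =
      ∑ f ∈ Fintype.piFinset A, MvPolynomial.eval f Q *
        ∏ j, ∏ b ∈ (A j).erase (f j), (f j - b)⁻¹ := by
  set tgt : (Fin n) →₀ ℕ := Finsupp.equivFunOnFinite.symm fun j => (A j).card - 1 with htgt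
  have htgtj : ∀ j, tgt j = (A j).card - 1 := fun j => rfl
  -- reduce to monomials
  have key : ∀ α ∈ Q.support, ∀ c : F,
      MvPolynomial.coeff tgt (monomial α c) =
      ∑ f ∈ Fintype.piFinset A, MvPolynomial.eval f (monomial α c) *
        ∏ j, ∏ b ∈ (A j).erase (f j), (f j - b)⁻¹ := by
    intro α hα c
    have hαsum : ∑ j, α j ≤ ∑ j, ((A j).card - 1) := by
      refine le_trans ?_ (le_trans (MvPolynomial.le_totalDegree hα) hQ)
      rw [Finsupp.sum_fintype]
      intro; rfl
    have hcard : ∀ j, 0 < (A j).card := fun j => card_pos.2 (hA j)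
    have heval : ∀ f : Fin n → F, MvPolynomial.eval f (monomial α c) = c * ∏ j, f j ^ α j := by
      intro f
      rw [MvPolynomial.eval_monomial, Finsupp.prod_fintype]
      intro; exact pow_zero _
    have hrhs : ∑ f ∈ Fintype.piFinset A, MvPolynomial.eval f (monomial α c) *
        ∏ j, ∏ b ∈ (A j).erase (f j), (f j - b)⁻¹ =
        c * ∏ j, ∑ a ∈ A j, a ^ α j * ∏ b ∈ (A j).erase a, (a - b)⁻¹ := by
      rw [Finset.prod_univ_sum, Finset.mul_sum]
      refine Finset.sum_congr rfl fun f hf => ?_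
      rw [heval, mul_assoc, ← Finset.prod_mul_distrib]
    rw [hrhs, MvPolynomial.coeff_monomial]
    by_cases hall : ∀ j, (A j).card - 1 ≤ α j
    · have hsum2 : ∑ j, ((A j).card - 1) ≤ ∑ j, α j :=
        Finset.sum_le_sum fun j _ => hall j
      have heq : ∀ j, α j = (A j).card - 1 := by
        intro j
        have := (Finset.sum_eq_sum_iff_of_le (fun i _ => hall i)).1
          (le_antisymm hsum2 hαsum)
        exact (this j (mem_univ j)).symm
      have hα_eq : α = tgt := Finsupp.ext fun j => (heq j).trans (htgtj j).symm
      rw [if_pos hα_eq]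
      have : ∀ j, (∑ a ∈ A j, a ^ α j * ∏ b ∈ (A j).erase a, (a - b)⁻¹) = 1 := by
        intro j
        rw [lagrange_weight_pow (A j) (α j) (by rw [heq j]; exact Nat.sub_lt (hcard j) one_pos),
          if_pos (heq j)]
      rw [Finset.prod_congr rfl fun j _ => this j]
      simp
    · push_neg at hall
      obtain ⟨i, hi⟩ := hall
      have hi' : α i < (A i).card - 1 := hi
      have hαne : α ≠ tgt := by
        intro h
        rw [h, htgtj i] at hi'
        exact lt_irrefl _ hi'
      rw [if_neg hαne]
      have : (∑ a ∈ A i, a ^ α i * ∏ b ∈ (A i).erase a, (a - b)⁻¹) = 0 := by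
        rw [lagrange_weight_pow (A i) (α i)
          (lt_trans hi' (Nat.sub_lt (hcard i) one_pos)), if_neg (Nat.ne_of_lt hi')]
      rw [Finset.prod_eq_zero (mem_univ i) this, mul_zero]
  conv_lhs => rw [← MvPolynomial.support_sum_monomial_coeff Q]
  conv_rhs => rw [← MvPolynomial.support_sum_monomial_coeff Q]
  rw [MvPolynomial.coeff_sum]
  have : ∀ f ∈ Fintype.piFinset A,
      MvPolynomial.eval f (∑ α ∈ Q.support, monomial α (MvPolynomial.coeff α Q)) *
        ∏ j, ∏ b ∈ (A j).erase (f j), (f j - b)⁻¹ =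
      ∑ α ∈ Q.support, MvPolynomial.eval f (monomial α (MvPolynomial.coeff α Q)) *
        ∏ j, ∏ b ∈ (A j).erase (f j), (f j - b)⁻¹ := by
    intro f _
    rw [map_sum, Finset.sum_mul]
  rw [Finset.sum_congr rfl this, Finset.sum_comm]
  exact Finset.sum_congr rfl fun α hα => key α hα _

end Aux

section Aux2

lemma totalDegree_sumX_le {K : Type*} [CommSemiring K] [Nontrivial K] {n : ℕ} :
    (∑ j : Fin n, (X j : MvPolynomial (Fin n) K)).totalDegree ≤ 1 := by
  refine (totalDegree_finset_sum _ _).trans ?_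
  exact Finset.sup_le fun j _ => (totalDegree_X j).le

lemma prod_linear_expand {K : Type*} [CommRing K] [Nontrivial K] {n : ℕ} (s : Finset K) :
    ∃ E : MvPolynomial (Fin n) K,
      (∏ c ∈ s, ((∑ j, X j) - C c)) = (∑ j, X j) ^ s.card + E ∧
      (E = 0 ∨ E.totalDegree < s.card) := by
  classical
  induction s using Finset.induction_on with
  | empty => exact ⟨0, by simp, Or.inl rfl⟩
  | @insert a s ha ih =>
    obtain ⟨E, hE, hEd⟩ := ih
    set T : MvPolynomial (Fin n) K := ∑ j, X j with hT
    refine ⟨-(T ^ s.card * C a) + (T - C a) * E, ?_, Or.inr ?_⟩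
    · rw [Finset.prod_insert ha, hE, Finset.card_insert_of_notMem ha]
      ring
    · rw [Finset.card_insert_of_notMem ha]
      refine lt_of_le_of_lt (totalDegree_add _ _) ?_
      rw [Nat.lt_succ_iff, max_le_iff]
      have hT1 : T.totalDegree ≤ 1 := totalDegree_sumX_le
      have h2 : (T - C a).totalDegree ≤ 1 := by
        rw [sub_eq_add_neg, ← map_neg]
        exact (totalDegree_add _ _).trans
          (max_le hT1 ((totalDegree_C _).trans_le (Nat.zero_le 1)))
      constructor
      · rw [totalDegree_neg]
        refine (totalDegree_mul _ _).trans ?_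
        have h1 : (T ^ s.card).totalDegree ≤ s.card :=
          (totalDegree_pow _ _).trans (by
            calc s.card * T.totalDegree ≤ s.card * 1 := Nat.mul_le_mul_left _ hT1
            _ = s.card := mul_one _)
        refine le_trans (add_le_add h1 (totalDegree_C _).le) (by simp)
      · rcases hEd with h | h
        · rw [h, mul_zero]
          simpa using Nat.zero_le _
        · refine (totalDegree_mul _ _).trans ?_
          omega

end Aux2

/-- Combinatorial Nullstellensatz in the Alon–Nathanson–Ruzsa form. -/
theorem anr_polynomial_lemma {F : Type*} [Field F] [DecidableEq F] {n : ℕ}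
    (A : Fin n → Finset F) (hA : ∀ j, (A j).Nonempty)
    (P : MvPolynomial (Fin n) F) (hP : P ≠ 0)
    (hdeg : P.totalDegree ≤ ∑ j, ((A j).card - 1))
    (hcoeff : MvPolynomial.coeff (Finsupp.equivFunOnFinite.symm fun j => (A j).card - 1)
        (P * (∑ j, X j) ^ ((∑ j, ((A j).card - 1)) - P.totalDegree)) ≠ 0) :
    (∑ j, ((A j).card - 1)) - P.totalDegree + 1 ≤
      (((Fintype.piFinset A).filter fun f => MvPolynomial.eval f P ≠ 0).image
        fun f => ∑ i, f i).card := by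
  classical
  by_contra hcon
  push_neg at hcon
  set D : ℕ := ∑ j, ((A j).card - 1) with hD
  set m : ℕ := D - P.totalDegree with hm
  set S : Finset F := ((Fintype.piFinset A).filter fun f => MvPolynomial.eval f P ≠ 0).image
      fun f => ∑ i, f i with hS
  have hScard : S.card ≤ m := Nat.lt_succ_iff.1 hcon
  -- the extension field
  set K := FractionRing (Polynomial F) with hK
  haveI : Infinite (Polynomial F) := Polynomial.infinite
  haveI : Infinite K := Infinite.of_injective _ (IsFractionRing.injective (Polynomial F) K)
  set φ : F →+* K := (algebraMap (Polynomial F) K).comp Polynomial.C with hφ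
  have hφinj : Function.Injective φ := φ.injective
  set A' : Fin n → Finset K := fun j => (A j).image φ with hA'
  have hA'card : ∀ j, (A' j).card = (A j).card := fun j => Finset.card_image_of_injective _ hφinj
  have hA'ne : ∀ j, (A' j).Nonempty := fun j => (hA j).image φ
  obtain ⟨Cs, hSC, hCcard⟩ := Infinite.exists_superset_card_eq (S.image φ) m
    (le_trans Finset.card_image_le hScard)
  set T : MvPolynomial (Fin n) K := ∑ j, X j with hT
  set Q : MvPolynomial (Fin n) K := (MvPolynomial.map φ P) * ∏ c ∈ Cs, (T - C c) with hQ
  have hdm : P.totalDegree + m = D := Nat.add_sub_cancel' hdeg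
  have hPφdeg : (MvPolynomial.map φ P).totalDegree ≤ P.totalDegree :=
    Finset.sup_mono (MvPolynomial.support_map_subset _ _)
  have hT1 : T.totalDegree ≤ 1 := by
    refine (totalDegree_finset_sum _ _).trans ?_
    exact Finset.sup_le fun j _ => (totalDegree_X j).le
  -- total degree bound for Q
  have hQdeg : Q.totalDegree ≤ ∑ j, ((A' j).card - 1) := by
    have h1 : (∏ c ∈ Cs, (T - C c)).totalDegree ≤ m := by
      refine (totalDegree_finset_prod _ _).trans ?_
      calc ∑ c ∈ Cs, (T - C c).totalDegree ≤ ∑ c ∈ Cs, 1 := by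
            refine Finset.sum_le_sum fun c _ => ?_
            rw [sub_eq_add_neg, ← map_neg]
            exact (totalDegree_add _ _).trans
              (max_le hT1 ((totalDegree_C _).trans_le (Nat.zero_le 1)))
        _ = m := by rw [Finset.sum_const, smul_eq_mul, mul_one, hCcard]
    have : Q.totalDegree ≤ P.totalDegree + m :=
      (totalDegree_mul _ _).trans (add_le_add hPφdeg h1)
    rw [hdm] at this
    refine this.trans (le_of_eq ?_)
    exact Finset.sum_congr rfl fun j _ => by rw [hA'card]
  -- the target exponent over K
  have htgt : (Finsupp.equivFunOnFinite.symm fun j => (A' j).card - 1) =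
      (Finsupp.equivFunOnFinite.symm fun j : Fin n => (A j).card - 1) := by
    congr 1
    funext j
    rw [hA'card]
  set tgt : (Fin n) →₀ ℕ := Finsupp.equivFunOnFinite.symm fun j : Fin n => (A j).card - 1
    with htgtdef
  have htgtsum : ∑ i ∈ tgt.support, tgt i = D := by
    rw [Finset.sum_subset (Finset.subset_univ tgt.support)
      (fun i _ hi => Finsupp.notMem_support_iff.1 hi)]
    rfl
  -- the coefficient of Q at tgt is nonzero
  have hQcoeff : MvPolynomial.coeff tgt Q ≠ 0 := by
    obtain ⟨E, hEeq, hEd⟩ := prod_linear_expand (n := n) Cs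
    have : Q = MvPolynomial.map φ (P * (∑ j, X j) ^ m) + (MvPolynomial.map φ P) * E := by
      rw [hQ, hEeq, hCcard, map_mul, mul_add]
      congr 1
      rw [map_pow, map_sum]
      simp [MvPolynomial.map_X]
    rw [this, MvPolynomial.coeff_add, MvPolynomial.coeff_map]
    have hzero : MvPolynomial.coeff tgt ((MvPolynomial.map φ P) * E) = 0 := by
      rcases hEd with h | h
      · rw [h, mul_zero, MvPolynomial.coeff_zero]
      · refine MvPolynomial.coeff_eq_zero_of_totalDegree_lt ?_
        rw [htgtsum, hCcard] at *
        have := (totalDegree_mul (MvPolynomial.map φ P) E)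
        omega
    rw [hzero, add_zero]
    intro h
    exact hcoeff (hφinj (by rwa [map_zero]))
  -- but the coefficient is zero by the coefficient formula
  have hQzero : MvPolynomial.coeff tgt Q = 0 := by
    rw [← htgt, coeff_formula A' hA'ne Q hQdeg]
    refine Finset.sum_eq_zero fun f hf => ?_
    have hmem : ∀ j, f j ∈ A' j := fun j => Fintype.mem_piFinset.1 hf j
    have hex : ∀ j, ∃ a ∈ A j, φ a = f j := by
      intro j
      simpa [hA', Finset.mem_image] using hmem j
    choose g hg hgf using hex
    have hgP : Fin n → F := g
    have hevalmap : MvPolynomial.eval f (MvPolynomial.map φ P) = φ (MvPolynomial.eval g P) := by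
      have h1 : MvPolynomial.eval f (MvPolynomial.map φ P) =
          MvPolynomial.eval₂ φ f P := MvPolynomial.eval_map _ _ _
      have h2 : φ (MvPolynomial.eval g P) = MvPolynomial.eval₂ (φ.comp (RingHom.id F)) (φ ∘ g) P := by
        rw [← MvPolynomial.eval₂_id P (g := g), MvPolynomial.eval₂_comp_left]
      rw [h1, h2, RingHom.comp_id]
      congr 1
      funext j
      exact (hgf j).symm
    rw [hQ, map_mul, hevalmap]
    by_cases hgz : MvPolynomial.eval g P = 0
    · rw [hgz, map_zero, zero_mul, zero_mul]
    · have hgS : (∑ i, g i) ∈ S := by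
        rw [hS]
        refine Finset.mem_image.2 ⟨g, ?_, rfl⟩
        rw [Finset.mem_filter]
        exact ⟨Fintype.mem_piFinset.2 hg, hgz⟩
      have hfC : (∑ i, f i) ∈ Cs := by
        have : φ (∑ i, g i) ∈ S.image φ := Finset.mem_image_of_mem φ hgS
        have h2 : φ (∑ i, g i) = ∑ i, f i := by
          rw [map_sum]
          exact Finset.sum_congr rfl fun i _ => hgf i
        rw [h2] at this
        exact hSC this
      have : MvPolynomial.eval f (∏ c ∈ Cs, (T - C c)) = 0 := by
        rw [map_prod]
        refine Finset.prod_eq_zero hfC ?_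
        simp [hT]
      rw [this, mul_zero, zero_mul]
  exact hQcoeff hQzero
end

section
/- (Dyson's constant term conjecture) For nonnegative integers a_0, a_1, ..., a_n, the constant term of the Laurent polynomial ∏_{0≤i≠j≤n}(1 − x_i/x_j)^{a_j} equals the multinomial coefficient (a_0 + a_1 + ... + a_n)!/(a_0!·a_1!···a_n!). -/
open Finset

/-- Multivariate Laurent monomial `x^v` in the group algebra `ℚ[ℤ^N]`. -/
noncomputable def laurentMonomial {N : ℕ} (v : Fin N → ℤ) :
    AddMonoidAlgebra ℚ (Fin N →₀ ℤ) :=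
  AddMonoidAlgebra.single (Finsupp.equivFunOnFinite.symm v) 1

/-- The constant term of a Laurent polynomial in `N` variables. -/
noncomputable def constantTerm {N : ℕ} (f : AddMonoidAlgebra ℚ (Fin N →₀ ℤ)) : ℚ :=
  (f.coeff : (Fin N →₀ ℤ) →₀ ℚ) 0

open Finset Polynomial

lemma lagrange_leading {ι : Type*} [DecidableEq ι] (s : Finset ι) (v : ι → ℚ)
    (hv : Set.InjOn v s) (hs : s.Nonempty) :
    ∑ k ∈ s, (v k) ^ (s.card - 1) * (∏ i ∈ s.erase k, (v k - v i))⁻¹ = 1 := by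
  set n := s.card - 1 with hn
  have hcard : s.card = n + 1 := (Nat.succ_pred_eq_of_pos (card_pos.mpr hs)).symm
  have hdeg : (X ^ n : ℚ[X]).degree < s.card := by
    rw [degree_X_pow, hcard]; exact_mod_cast Nat.lt_succ_self n
  have h := Lagrange.eq_interpolate (f := (X ^ n : ℚ[X])) hv hdeg
  have hco := congrArg (fun p => Polynomial.coeff p n) h
  simp only [Lagrange.interpolate_apply, coeff_X_pow, if_pos rfl, Polynomial.finset_sum_coeff] at hco
  rw [if_pos trivial] at hco; rw [eq_comm] at hco
  rw [← hco]
  refine Finset.sum_congr rfl fun k hk => ?_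
  have hbn : (Lagrange.basis s v k).natDegree = n := by
    have := Lagrange.degree_basis hv hk
    rw [hcard] at this
    exact natDegree_eq_of_degree_eq_some (by simpa using this)
  have hlead : (Lagrange.basis s v k).coeff n = (∏ i ∈ s.erase k, (v k - v i))⁻¹ := by
    rw [← hbn, ← leadingCoeff, Lagrange.basis, leadingCoeff_prod]
    rw [← Finset.prod_inv_distrib]
    refine Finset.prod_congr rfl fun j hj => ?_
    have hne : v k ≠ v j := by
      rw [Ne, hv.eq_iff hk (mem_of_mem_erase hj)]
      exact fun h => (mem_erase.mp hj).1 h.symm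
    rw [Lagrange.basisDivisor, leadingCoeff_mul, leadingCoeff_C, (monic_X_sub_C _).leadingCoeff, mul_one]
  rw [coeff_C_mul, hlead]
  simp [eval_pow]
open Finset

lemma eval_prod_pairs_ne_zero {N : ℕ} (s : Finset (Fin N)) (x : Fin N → ℚ)
    (hx : Set.InjOn x s) :
    MvPolynomial.eval x (∏ m ∈ s, ∏ i ∈ s.erase m, (MvPolynomial.X m - MvPolynomial.X i)
      : MvPolynomial (Fin N) ℚ) ≠ 0 := by
  simp only [map_prod, map_sub, MvPolynomial.eval_X]
  refine Finset.prod_ne_zero_iff.mpr fun m hm => Finset.prod_ne_zero_iff.mpr fun i hi => ?_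
  have : x m ≠ x i := fun h =>
    (mem_erase.mp hi).1 (hx (mem_of_mem_erase hi) hm h.symm)
  exact sub_ne_zero.mpr this

lemma good_poly_identity {N : ℕ} (s : Finset (Fin N)) (hs : s.Nonempty) :
    ∑ k ∈ s, (MvPolynomial.X k) ^ (s.card - 1) *
        ∏ m ∈ s.erase k, ∏ i ∈ s.erase m, (MvPolynomial.X m - MvPolynomial.X i)
      = (∏ m ∈ s, ∏ i ∈ s.erase m, (MvPolynomial.X m - MvPolynomial.X i)
        : MvPolynomial (Fin N) ℚ) := by
  set A := ∑ k ∈ s, (MvPolynomial.X k) ^ (s.card - 1) *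
      ∏ m ∈ s.erase k, ∏ i ∈ s.erase m,
        (MvPolynomial.X m - MvPolynomial.X i : MvPolynomial (Fin N) ℚ) with hA
  set B := (∏ m ∈ s, ∏ i ∈ s.erase m,
      (MvPolynomial.X m - MvPolynomial.X i) : MvPolynomial (Fin N) ℚ) with hB
  have key : B * (A - B) = 0 := by
    apply MvPolynomial.funext
    intro x
    rw [map_mul, map_zero]
    by_cases hx : Set.InjOn x s
    · have hAB : MvPolynomial.eval x A = MvPolynomial.eval x B := by
        have hL := lagrange_leading s x hx hs
        simp only [hA, hB, map_sum, map_mul, map_pow, map_prod, map_sub, MvPolynomial.eval_X]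
        have hrw : ∀ k ∈ s, (∏ m ∈ s.erase k, ∏ i ∈ s.erase m, (x m - x i))
            = (∏ i ∈ s.erase k, (x k - x i))⁻¹ *
              (∏ m ∈ s, ∏ i ∈ s.erase m, (x m - x i)) := by
          intro k hk
          rw [← Finset.mul_prod_erase s _ hk, inv_mul_cancel_left₀]
          refine Finset.prod_ne_zero_iff.mpr fun i hi => sub_ne_zero.mpr fun h => ?_
          exact (mem_erase.mp hi).1 (hx (mem_of_mem_erase hi) hk h.symm)
        rw [Finset.sum_congr rfl fun k hk => by rw [hrw k hk]]
        simp_rw [← mul_assoc]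
        rw [← Finset.sum_mul, hL, one_mul]
      rw [map_sub, hAB, sub_self, mul_zero]
    · have : MvPolynomial.eval x B = 0 := by
        simp only [Set.InjOn, not_forall] at hx
        obtain ⟨i, hi, j, hj, hij, hne⟩ := hx
        simp only [hB, map_prod, map_sub, MvPolynomial.eval_X]
        refine Finset.prod_eq_zero (i := i) hi ?_
        refine Finset.prod_eq_zero (i := j) (mem_erase.mpr ⟨fun h => hne h.symm, hj⟩) ?_
        rw [hij, sub_self]
      rw [this, zero_mul]
  have hBne : B ≠ 0 := by
    intro h
    have hinj : Set.InjOn (fun i : Fin N => ((i : ℕ) : ℚ)) s := fun i _ j _ hij => by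
      simp only at hij
      have : (i : ℕ) = (j : ℕ) := by exact_mod_cast hij
      exact Fin.val_injective this
    have := eval_prod_pairs_ne_zero s _ hinj
    rw [hB] at h
    exact this (by rw [h, map_zero])
  rcases mul_eq_zero.mp key with h | h
  · exact absurd h hBne
  · exact sub_eq_zero.mp h
open Finset

variable {N : ℕ}

abbrev LL (N : ℕ) := AddMonoidAlgebra ℚ (Fin N →₀ ℤ)

lemma equivSymm_add (v w : Fin N → ℤ) :
    Finsupp.equivFunOnFinite.symm (v + w)
      = Finsupp.equivFunOnFinite.symm v + Finsupp.equivFunOnFinite.symm w := by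
  ext a; simp

lemma lm_mul (v w : Fin N → ℤ) :
    laurentMonomial v * laurentMonomial w = laurentMonomial (v + w) := by
  unfold laurentMonomial
  rw [AddMonoidAlgebra.single_mul_single, one_mul, equivSymm_add]

lemma lm_zero : (laurentMonomial (0 : Fin N → ℤ)) = 1 := by
  unfold laurentMonomial
  rw [AddMonoidAlgebra.one_def]
  congr 1
  ext a; simp

lemma isUnit_lm (v : Fin N → ℤ) : IsUnit (laurentMonomial v) := by
  refine IsUnit.of_mul_eq_one (laurentMonomial (-v)) ?_
  rw [lm_mul, add_neg_cancel, lm_zero]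

lemma lm_support (v : Fin N → ℤ) :
    (laurentMonomial v).coeff.support
      = {Finsupp.equivFunOnFinite.symm v} :=
  Finsupp.support_single_ne_zero _ one_ne_zero

lemma constantTerm_add (f g : LL N) :
    constantTerm (f + g) = constantTerm f + constantTerm g := by
  unfold constantTerm; rfl

lemma constantTerm_one : constantTerm (1 : LL N) = 1 := by
  unfold constantTerm
  rw [AddMonoidAlgebra.one_def]
  simp [AddMonoidAlgebra.coeff_single]

lemma constantTerm_sum {α : Type*} (t : Finset α) (f : α → LL N) :
    constantTerm (∑ k ∈ t, f k) = ∑ k ∈ t, constantTerm (f k) := by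
  classical
  induction t using Finset.induction with
  | empty => simp [constantTerm]
  | insert _ _ h ih => rw [Finset.sum_insert h, Finset.sum_insert h, constantTerm_add, ih]

lemma constantTerm_eq_zero {f : LL N} (h : (0 : Fin N →₀ ℤ) ∉ f.coeff.support) :
    constantTerm f = 0 := Finsupp.notMem_support_iff.mp h

/-- supports with `v k = 0` -/
def SuppZ (k : Fin N) (f : LL N) : Prop :=
  ∀ v ∈ f.coeff.support, v k = 0

/-- supports with `1 ≤ v k` -/
def SuppP (k : Fin N) (f : LL N) : Prop :=
  ∀ v ∈ f.coeff.support, 1 ≤ v k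

lemma suppZ_one (k : Fin N) : SuppZ k (1 : LL N) := by
  intro v hv
  rw [AddMonoidAlgebra.one_def] at hv
  have := Finsupp.support_single_subset hv
  simp only [Finset.mem_singleton] at this
  rw [this]; rfl

lemma suppZ_mul {k : Fin N} {f g : LL N} (hf : SuppZ k f) (hg : SuppZ k g) :
    SuppZ k (f * g) := by
  classical
  intro v hv
  obtain ⟨v₁, h₁, v₂, h₂, rfl⟩ := Finset.mem_add.mp (AddMonoidAlgebra.support_coeff_mul_subset f g hv)
  rw [Finsupp.add_apply, hf v₁ h₁, hg v₂ h₂, add_zero]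

lemma suppP_mulZP {k : Fin N} {f g : LL N} (hf : SuppZ k f) (hg : SuppP k g) :
    SuppP k (f * g) := by
  classical
  intro v hv
  obtain ⟨v₁, h₁, v₂, h₂, rfl⟩ := Finset.mem_add.mp (AddMonoidAlgebra.support_coeff_mul_subset f g hv)
  rw [Finsupp.add_apply, hf v₁ h₁, zero_add]
  exact hg v₂ h₂

lemma suppP_mul {k : Fin N} {f g : LL N} (hf : SuppP k f) (hg : SuppP k g) :
    SuppP k (f * g) := by
  classical
  intro v hv
  obtain ⟨v₁, h₁, v₂, h₂, rfl⟩ := Finset.mem_add.mp (AddMonoidAlgebra.support_coeff_mul_subset f g hv)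
  rw [Finsupp.add_apply]
  have := hf v₁ h₁; have := hg v₂ h₂; omega

lemma suppP_add {k : Fin N} {f g : LL N} (hf : SuppP k f) (hg : SuppP k g) :
    SuppP k (f + g) := by
  classical
  intro v hv
  have := Finsupp.support_add (g₁ := f.coeff) (g₂ := g.coeff) hv
  rcases Finset.mem_union.mp this with h | h
  · exact hf v h
  · exact hg v h

lemma suppZ_prod {α : Type*} {k : Fin N} (t : Finset α) (f : α → LL N)
    (h : ∀ j ∈ t, SuppZ k (f j)) : SuppZ k (∏ j ∈ t, f j) := by
  classical
  induction t using Finset.induction with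
  | empty => simpa using suppZ_one k
  | @insert a t ha ih =>
      rw [Finset.prod_insert ha]
      exact suppZ_mul (h a (mem_insert_self a t))
        (ih fun j hj => h j (mem_insert_of_mem hj))

lemma suppZ_pow {k : Fin N} {f : LL N} (hf : SuppZ k f) (m : ℕ) : SuppZ k (f ^ m) := by
  induction m with
  | zero => simpa using suppZ_one k
  | succ m ih => rw [pow_succ]; exact suppZ_mul ih hf
open Finset

variable {N : ℕ}

lemma prod_offDiag' {M : Type*} [CommMonoid M] (s : Finset (Fin N)) (g : Fin N × Fin N → M) :
    ∏ p ∈ s.offDiag, g p = ∏ m ∈ s, ∏ i ∈ s.erase m, g (i, m) := by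
  classical
  rw [show s.offDiag = (s ×ˢ s).filter (fun a => a.1 ≠ a.2) from by ext; simp [and_assoc], Finset.prod_filter, Finset.prod_product_right]
  refine Finset.prod_congr rfl fun m hm => ?_
  rw [← Finset.prod_erase (a := m) s
    (f := fun x => if (x, m).1 ≠ (x, m).2 then g (x, m) else 1) (by simp)]
  exact Finset.prod_congr rfl fun i hi => by simp [(Finset.mem_erase.mp hi).1]

noncomputable def dysonP (s : Finset (Fin N)) (m : Fin N) : LL N :=
  ∏ i ∈ s.erase m, (1 - laurentMonomial (Pi.single i 1 - Pi.single m 1))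

noncomputable def dysonF (s : Finset (Fin N)) (a : Fin N → ℕ) : LL N :=
  ∏ p ∈ s.offDiag, (1 - laurentMonomial (Pi.single p.1 1 - Pi.single p.2 1)) ^ (a p.2)

lemma dysonF_grouped (s : Finset (Fin N)) (a : Fin N → ℕ) :
    dysonF s a = ∏ m ∈ s, dysonP s m ^ a m := by
  rw [dysonF]
  refine (prod_offDiag' (M := LL N) s
      (fun p => (1 - laurentMonomial (Pi.single p.1 1 - Pi.single p.2 1)) ^ a p.2)).trans ?_
  exact Finset.prod_congr rfl fun m _ => by rw [dysonP, ← Finset.prod_pow]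


/-- The core Lagrange identity in the Laurent ring. -/
lemma good_core (s : Finset (Fin N)) (hs : s.Nonempty) :
    ∑ k ∈ s, ∏ m ∈ s.erase k, dysonP s m = ∏ m ∈ s, dysonP s m := by
  classical
  set n := s.card - 1 with hn
  set u : Fin N → LL N := fun i => laurentMonomial (Pi.single i 1) with hu
  set χ : MvPolynomial (Fin N) ℚ →ₐ[ℚ] LL N := MvPolynomial.aeval u with hχ
  have hQ : ∀ m ∈ s, χ (∏ i ∈ s.erase m, (MvPolynomial.X m - MvPolynomial.X i))
      = u m ^ n * dysonP s m := by
    intro m hm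
    rw [map_prod]
    have : ∀ i ∈ s.erase m, χ (MvPolynomial.X m - MvPolynomial.X i)
        = u m * (1 - laurentMonomial (Pi.single i 1 - Pi.single m 1)) := by
      intro i _
      rw [map_sub, MvPolynomial.aeval_X, MvPolynomial.aeval_X, mul_sub, mul_one, hu]
      simp only
      rw [lm_mul]
      congr 2
      abel
    rw [Finset.prod_congr rfl this, Finset.prod_mul_distrib, Finset.prod_const,
      Finset.card_erase_of_mem hm, dysonP, hn]
  have hid := congrArg χ (good_poly_identity s hs)
  rw [map_sum, map_prod] at hid
  have hU : ∀ k ∈ s, χ (MvPolynomial.X k ^ (s.card - 1) *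
        ∏ m ∈ s.erase k, ∏ i ∈ s.erase m, (MvPolynomial.X m - MvPolynomial.X i))
      = (∏ m ∈ s, u m ^ n) * ∏ m ∈ s.erase k, dysonP s m := by
    intro k hk
    rw [map_mul, map_pow, MvPolynomial.aeval_X, map_prod]
    rw [Finset.prod_congr rfl fun m hm => hQ m (mem_of_mem_erase hm)]
    rw [Finset.prod_mul_distrib, ← mul_assoc, ← hn, ← Finset.mul_prod_erase s _ hk]
  rw [Finset.sum_congr rfl hU, Finset.prod_congr rfl hQ, Finset.prod_mul_distrib,
    ← Finset.mul_sum] at hid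
  have hunit : IsUnit (∏ m ∈ s, u m ^ n) := by
    refine Finset.prod_induction _ IsUnit (fun _ _ => IsUnit.mul) isUnit_one
      fun m _ => (isUnit_lm _).pow n
  exact hunit.mul_left_cancel hid

open Finset

variable {N : ℕ}

lemma dysonF_update (s : Finset (Fin N)) (a : Fin N → ℕ) (k : Fin N) (hk : k ∈ s)
    (ha : ∀ m ∈ s, 1 ≤ a m) :
    dysonF s (Function.update a k (a k - 1))
      = (∏ m ∈ s, dysonP s m ^ (a m - 1)) * ∏ m ∈ s.erase k, dysonP s m := by
  classical
  rw [dysonF_grouped]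
  have h2 : ∏ m ∈ s.erase k, dysonP s m = ∏ m ∈ s, (if m = k then 1 else dysonP s m) := by
    rw [← Finset.mul_prod_erase s _ hk, if_pos rfl, one_mul]
    exact Finset.prod_congr rfl fun m hm => (if_neg (Finset.mem_erase.mp hm).1).symm
  rw [h2, ← Finset.prod_mul_distrib]
  refine Finset.prod_congr rfl fun m hm => ?_
  by_cases h : m = k
  · subst h; rw [Function.update_self, if_pos rfl, mul_one]
  · rw [Function.update_of_ne h, if_neg h, ← pow_succ]
    congr 1; have := ha m hm; omega

lemma good_recurrence (s : Finset (Fin N)) (hs : s.Nonempty) (a : Fin N → ℕ)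
    (ha : ∀ m ∈ s, 1 ≤ a m) :
    ∑ k ∈ s, dysonF s (Function.update a k (a k - 1)) = dysonF s a := by
  rw [Finset.sum_congr rfl fun k hk => dysonF_update s a k hk ha, ← Finset.mul_sum,
    good_core s hs, dysonF_grouped, ← Finset.prod_mul_distrib]
  refine Finset.prod_congr rfl fun m hm => ?_
  rw [← pow_succ]; congr 1; have := ha m hm; omega

lemma dysonF_erase (s : Finset (Fin N)) (k : Fin N) (hk : k ∈ s) (a : Fin N → ℕ)
    (hak : a k = 0) :
    dysonF s a = dysonF (s.erase k) a *
      ∏ j ∈ s.erase k, (1 - laurentMonomial (Pi.single k 1 - Pi.single j 1)) ^ a j := by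
  classical
  have hnk : k ∉ s.erase k := Finset.notMem_erase k s
  rw [dysonF]
  conv_lhs => rw [← Finset.insert_erase hk]
  rw [Finset.offDiag_insert (α := Fin N) (a := k) (s := s.erase k) hnk]
  have d2 : Disjoint ((s.erase k).offDiag) ({k} ×ˢ s.erase k) := by
    rw [Finset.disjoint_left]
    rintro ⟨p1, p2⟩ hp hq
    rw [Finset.mem_product, Finset.mem_singleton] at hq
    exact hnk (hq.1 ▸ (Finset.mem_offDiag.mp hp).1)
  have d1 : Disjoint ((s.erase k).offDiag ∪ {k} ×ˢ s.erase k) (s.erase k ×ˢ {k}) := by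
    rw [Finset.disjoint_left]
    rintro ⟨p1, p2⟩ hp hq
    rw [Finset.mem_product, Finset.mem_singleton] at hq
    rcases Finset.mem_union.mp hp with h | h
    · exact hnk (hq.2 ▸ (Finset.mem_offDiag.mp h).2.1)
    · rw [Finset.mem_product, Finset.mem_singleton] at h
      exact hnk (hq.2 ▸ h.2)
  rw [Finset.prod_union d1, Finset.prod_union d2]
  have h3 : ∏ p ∈ s.erase k ×ˢ {k},
      (1 - laurentMonomial (Pi.single p.1 1 - Pi.single p.2 1)) ^ a p.2 = 1 := by
    refine Finset.prod_eq_one fun p hp => ?_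
    rw [Finset.mem_product, Finset.mem_singleton] at hp
    rw [hp.2, hak, pow_zero]
  have h4 : ∏ p ∈ {k} ×ˢ s.erase k,
      (1 - laurentMonomial (Pi.single p.1 1 - Pi.single p.2 1)) ^ a p.2
      = ∏ j ∈ s.erase k, (1 - laurentMonomial (Pi.single k 1 - Pi.single j 1)) ^ a j := by
    rw [Finset.singleton_product, Finset.prod_map]
    rfl
  rw [h3, mul_one, h4, dysonF]

lemma suppZ_one_sub_lm {k : Fin N} {w : Fin N → ℤ} (hw : w k = 0) :
    SuppZ k (1 - laurentMonomial w) := by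
  classical
  intro v hv
  have := Finsupp.support_sub (f := (1 : LL N).coeff) (g := (laurentMonomial w).coeff) hv
  rcases Finset.mem_union.mp this with h | h
  · rw [AddMonoidAlgebra.one_def] at h
    have := Finsupp.support_single_subset h
    rw [Finset.mem_singleton] at this
    rw [this]; rfl
  · rw [lm_support, Finset.mem_singleton] at h
    rw [h]
    simpa using hw

lemma suppP_neg_lm {k : Fin N} {w : Fin N → ℤ} (hw : w k = 1) :
    SuppP k (-laurentMonomial w) := by
  intro v hv
  rw [AddMonoidAlgebra.coeff_neg, Finsupp.support_neg, lm_support, Finset.mem_singleton] at hv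
  rw [hv]
  simpa using hw.ge

lemma one_add_suppP_mul {k : Fin N} {f g : LL N}
    (hf : ∃ d, f = 1 + d ∧ SuppP k d) (hg : ∃ d, g = 1 + d ∧ SuppP k d) :
    ∃ d, f * g = 1 + d ∧ SuppP k d := by
  obtain ⟨d, rfl, hd⟩ := hf
  obtain ⟨e, rfl, he⟩ := hg
  refine ⟨d + e + d * e, by ring, ?_⟩
  exact suppP_add (suppP_add hd he) (suppP_mul hd he)

lemma ct_boundary (s : Finset (Fin N)) (k : Fin N) (hk : k ∈ s) (a : Fin N → ℕ)
    (hak : a k = 0) :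
    constantTerm (dysonF s a) = constantTerm (dysonF (s.erase k) a) := by
  classical
  rw [dysonF_erase s k hk a hak]
  have hF : SuppZ k (dysonF (s.erase k) a) := by
    rw [dysonF]
    refine suppZ_prod _ _ fun p hp => suppZ_pow ?_ _
    obtain ⟨h1, h2, -⟩ := Finset.mem_offDiag.mp hp
    refine suppZ_one_sub_lm ?_
    rw [Pi.sub_apply, Pi.single_eq_of_ne (Ne.symm (Finset.mem_erase.mp h1).1),
      Pi.single_eq_of_ne (Ne.symm (Finset.mem_erase.mp h2).1), sub_zero]
  have hG : ∃ d, (∏ j ∈ s.erase k,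
      (1 - laurentMonomial (Pi.single k 1 - Pi.single j 1)) ^ a j) = 1 + d ∧ SuppP k d := by
    refine Finset.prod_induction _ (fun f => ∃ d, f = 1 + d ∧ SuppP k d)
      (fun f g hf hg => one_add_suppP_mul hf hg)
      ⟨0, by rw [add_zero], fun v hv => by simp at hv⟩ fun j hj => ?_
    have hfac : ∃ d, (1 - laurentMonomial (Pi.single k 1 - Pi.single j 1)) = 1 + d
        ∧ SuppP k d := by
      refine ⟨-laurentMonomial (Pi.single k 1 - Pi.single j 1), by ring, ?_⟩
      refine suppP_neg_lm ?_
      rw [Pi.sub_apply, Pi.single_eq_same,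
        Pi.single_eq_of_ne (Ne.symm (Finset.mem_erase.mp hj).1), sub_zero]
    induction (a j) with
    | zero => exact ⟨0, by rw [pow_zero, add_zero], fun v hv => by simp at hv⟩
    | succ m ihm => rw [pow_succ]; exact one_add_suppP_mul ihm hfac
  obtain ⟨d, hGd, hd⟩ := hG
  rw [hGd, mul_add, mul_one, constantTerm_add]
  have hz : constantTerm (dysonF (s.erase k) a * d) = 0 := by
    refine constantTerm_eq_zero fun h0 => ?_
    have := suppP_mulZP hF hd _ h0
    simp at this
  rw [hz, add_zero]
open Finset Nat

variable {N : ℕ}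

lemma multinomial_erase' (s : Finset (Fin N)) (k : Fin N) (hk : k ∈ s) (a : Fin N → ℕ)
    (hak : a k = 0) : Nat.multinomial s a = Nat.multinomial (s.erase k) a := by
  classical
  rw [Nat.multinomial, Nat.multinomial]
  rw [Finset.sum_erase s (by rw [hak]), ← Finset.mul_prod_erase s _ hk, hak,
    Nat.factorial_zero, one_mul]

lemma sum_update_sub (s : Finset (Fin N)) (k : Fin N) (hk : k ∈ s) (a : Fin N → ℕ)
    (h1 : 1 ≤ a k) :
    ∑ i ∈ s, Function.update a k (a k - 1) i = (∑ i ∈ s, a i) - 1 := by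
  classical
  rw [← Finset.add_sum_erase s _ hk, ← Finset.add_sum_erase s a hk, Function.update_self]
  have he : ∑ i ∈ s.erase k, Function.update a k (a k - 1) i = ∑ i ∈ s.erase k, a i :=
    Finset.sum_congr rfl fun i hi => by
      rw [Function.update_of_ne (Finset.mem_erase.mp hi).1]
  rw [he]
  omega

lemma multinomial_rec (s : Finset (Fin N)) (hs : s.Nonempty) (a : Fin N → ℕ)
    (ha : ∀ m ∈ s, 1 ≤ a m) :
    ∑ k ∈ s, Nat.multinomial s (Function.update a k (a k - 1)) = Nat.multinomial s a := by
  classical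
  have hPf : 0 < ∏ i ∈ s, (a i)! := Finset.prod_pos fun i _ => Nat.factorial_pos _
  apply Nat.eq_of_mul_eq_mul_right hPf
  rw [Finset.sum_mul]
  have hterm : ∀ k ∈ s, Nat.multinomial s (Function.update a k (a k - 1)) * ∏ i ∈ s, (a i)!
      = a k * ((∑ i ∈ s, a i) - 1)! := by
    intro k hk
    have spec := Nat.multinomial_spec s (Function.update a k (a k - 1))
    have hsum := sum_update_sub s k hk a (ha k hk)
    have hprod : ∏ i ∈ s, (Function.update a k (a k - 1) i)!
        = (a k - 1)! * ∏ i ∈ s.erase k, (a i)! := by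
      rw [← Finset.mul_prod_erase s _ hk, Function.update_self]
      congr 1
      exact Finset.prod_congr rfl fun i hi => by
        rw [Function.update_of_ne (Finset.mem_erase.mp hi).1]
    have hPfe : ∏ i ∈ s, (a i)! = a k * ((a k - 1)! * ∏ i ∈ s.erase k, (a i)!) := by
      rw [← Finset.mul_prod_erase s _ hk, ← Nat.mul_factorial_pred (Nat.pos_iff_ne_zero.mp (ha k hk)), mul_assoc]
    rw [hprod, hsum] at spec
    calc Nat.multinomial s (Function.update a k (a k - 1)) * ∏ i ∈ s, (a i)!
        = a k * (((a k - 1)! * ∏ i ∈ s.erase k, (a i)!) *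
            Nat.multinomial s (Function.update a k (a k - 1))) := by rw [hPfe]; ring
      _ = a k * ((∑ i ∈ s, a i) - 1)! := by rw [spec]
  rw [Finset.sum_congr rfl hterm, ← Finset.sum_mul]
  have hT : 1 ≤ ∑ i ∈ s, a i := by
    obtain ⟨k, hk⟩ := hs
    calc 1 ≤ a k := ha k hk
      _ ≤ ∑ i ∈ s, a i := Finset.single_le_sum (fun i _ => Nat.zero_le _) hk
  rw [Nat.mul_factorial_pred (Nat.pos_iff_ne_zero.mp hT), mul_comm]
  exact (Nat.multinomial_spec s a).symm

lemma dyson_key (M : ℕ) : ∀ {N : ℕ} (s : Finset (Fin N)) (a : Fin N → ℕ),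
    (∑ i ∈ s, a i) + s.card ≤ M →
    constantTerm (dysonF s a) = (Nat.multinomial s a : ℚ) := by
  induction M with
  | zero =>
      intro N s a h
      have hs : s = ∅ := Finset.card_eq_zero.mp (by omega)
      subst hs
      rw [dysonF]
      simp [constantTerm_one, Nat.multinomial]
  | succ M ih =>
      intro N s a h
      classical
      rcases Finset.eq_empty_or_nonempty s with rfl | hs
      · rw [dysonF]; simp [constantTerm_one, Nat.multinomial]
      by_cases hzero : ∃ k ∈ s, a k = 0
      · obtain ⟨k, hk, hak⟩ := hzero
        rw [ct_boundary s k hk a hak, multinomial_erase' s k hk a hak]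
        apply ih
        have h1 : ∑ i ∈ s.erase k, a i = ∑ i ∈ s, a i := Finset.sum_erase s (by rw [hak])
        have h2 : (s.erase k).card = s.card - 1 := Finset.card_erase_of_mem hk
        have h3 : 1 ≤ s.card := Finset.card_pos.mpr hs
        omega
      · push_neg at hzero
        have hpos : ∀ m ∈ s, 1 ≤ a m := fun m hm => Nat.one_le_iff_ne_zero.mpr (hzero m hm)
        rw [← good_recurrence s hs a hpos, constantTerm_sum]
        have hT : 1 ≤ ∑ i ∈ s, a i := by
          obtain ⟨k, hk⟩ := hs
          calc 1 ≤ a k := hpos k hk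
            _ ≤ ∑ i ∈ s, a i := Finset.single_le_sum (fun i _ => Nat.zero_le _) hk
        rw [Finset.sum_congr rfl fun k hk => ih s (Function.update a k (a k - 1))
          (by rw [sum_update_sub s k hk a (hpos k hk)]; omega)]
        rw [← Nat.cast_sum, multinomial_rec s hs a hpos]

/-- Dyson's constant term conjecture: the constant term of
`∏_{0 ≤ i ≠ j ≤ n} (1 - x_i/x_j)^{a_j}` is the multinomial coefficient
`(a_0 + ⋯ + a_n)!/(a_0! ⋯ a_n!)`. -/
theorem dyson_constant_term (n : ℕ) (a : Fin (n + 1) → ℕ) :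
    constantTerm
        (∏ p ∈ Finset.univ.offDiag,
          (1 - laurentMonomial (Pi.single p.1 1 - Pi.single p.2 1)) ^ (a p.2)) =
      (Nat.multinomial Finset.univ a : ℚ) := by
  have h := dyson_key ((∑ i ∈ (univ : Finset (Fin (n + 1))), a i) +
      (univ : Finset (Fin (n + 1))).card) univ a le_rfl
  rw [dysonF] at h
  exact h
end

section
/- (Cauchy–Davenport over a field) Let F be a field and A_1, ..., A_n finite nonempty subsets of F with |A_j| = k_j. Then |{a_1 + ... + a_n : a_j ∈ A_j}| ≥ min{p(F), k_1 + ... + k_n − n + 1}. -/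
open Finset

open Pointwise in
lemma sumset_step {F : Type*} [Field F] [DecidableEq F] {n : ℕ} (A : Fin (n+1) → Finset F) :
    ((Fintype.piFinset A).image fun f => ∑ i, f i) =
      A 0 + ((Fintype.piFinset fun i : Fin n => A i.succ).image fun f => ∑ i, f i) := by
  ext x
  simp only [mem_image, Fintype.mem_piFinset, Finset.mem_add]
  constructor
  · rintro ⟨f, hf, rfl⟩
    exact ⟨f 0, hf 0, ∑ i : Fin n, f i.succ, ⟨fun i => f i.succ, fun i => hf i.succ, rfl⟩,
      (Fin.sum_univ_succ f).symm⟩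
  · rintro ⟨a, ha, _, ⟨g, hg, rfl⟩, rfl⟩
    exact ⟨Fin.cons a g, fun i => Fin.cases ha hg i, by rw [Fin.sum_univ_succ]; simp⟩

lemma key {F : Type*} [Field F] [DecidableEq F] :
    ∀ (n : ℕ) (A : Fin n → Finset F), (∀ j, (A j).Nonempty) →
      min (AddMonoid.minOrder F) (↑(∑ j, (A j).card + 1 - n)) ≤
        (((Fintype.piFinset A).image fun f => ∑ i, f i).card : ℕ∞) := by
  intro n
  induction n with
  | zero =>
    intro A hA
    have : ((Fintype.piFinset A).image fun f => ∑ i, f i) = {0} := by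
      ext x; simp [eq_comm]
    simp [this]
  | succ n ih =>
    intro A hA
    rw [sumset_step]
    set T := ((Fintype.piFinset fun i : Fin n => A i.succ).image fun f => ∑ i, f i) with hT
    have hTne : T.Nonempty := by
      obtain ⟨g, hg⟩ := Fintype.piFinset_nonempty.2 fun i : Fin n => hA i.succ
      exact ⟨∑ i, g i, mem_image_of_mem _ hg⟩
    have hCD := cauchy_davenport_minOrder_add (hA 0) hTne
    have hIH := ih (fun i => A i.succ) (fun i => hA i.succ)
    have hk : 1 ≤ (A 0).card := (hA 0).card_pos
    have hS : n ≤ ∑ i : Fin n, (A i.succ).card := by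
      calc n = ∑ _i : Fin n, 1 := by simp
        _ ≤ _ := Finset.sum_le_sum fun i _ => (hA i.succ).card_pos
    rw [Fin.sum_univ_succ]
    rcases min_le_iff.1 hIH with hp | ht
    · have : AddMonoid.minOrder F ≤ ↑((A 0).card + T.card - 1) := by
        refine hp.trans ?_
        exact_mod_cast Nat.le_sub_one_of_lt (by omega : T.card < (A 0).card + T.card)
      calc min (AddMonoid.minOrder F) _ ≤ AddMonoid.minOrder F := min_le_left _ _
        _ = min (AddMonoid.minOrder F) ↑((A 0).card + T.card - 1) := (min_eq_left this).symm
        _ ≤ _ := hCD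
    · have ht' : ∑ i : Fin n, (A i.succ).card + 1 - n ≤ T.card := by exact_mod_cast ht
      refine le_trans ?_ hCD
      apply min_le_min le_rfl
      exact_mod_cast (by omega : (A 0).card + ∑ i : Fin n, (A i.succ).card + 1 - (n+1) ≤ (A 0).card + T.card - 1)

lemma minOrder_char_zero {F : Type*} [Field F] (h : ringChar F = 0) :
    AddMonoid.minOrder F = ⊤ := by
  rw [AddMonoid.minOrder_eq_top_iff, isAddTorsionFree_iff_not_isOfFinAddOrder]
  intro a ha hfin
  have hd : addOrderOf a ≠ 0 := hfin.addOrderOf_pos.ne'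
  have h0 : (addOrderOf a : F) * a = 0 := by
    rw [← nsmul_eq_mul]; exact addOrderOf_nsmul_eq_zero a
  have : (addOrderOf a : F) = 0 := by
    rcases mul_eq_zero.1 h0 with h' | h'
    · exact h'
    · exact absurd h' ha
  have := (CharP.cast_eq_zero_iff F (ringChar F) _).1 this
  rw [h] at this
  exact hd (Nat.eq_zero_of_zero_dvd this)

lemma minOrder_char_ne {F : Type*} [Field F] (h : ringChar F ≠ 0) :
    (ringChar F : ℕ∞) ≤ AddMonoid.minOrder F := by
  rw [AddMonoid.le_minOrder]
  intro a ha hfin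
  have hd : 0 < addOrderOf a := hfin.addOrderOf_pos
  have h0 : (addOrderOf a : F) * a = 0 := by
    rw [← nsmul_eq_mul]; exact addOrderOf_nsmul_eq_zero a
  have : (addOrderOf a : F) = 0 := by
    rcases mul_eq_zero.1 h0 with h' | h'
    · exact h'
    · exact absurd h' ha
  have hdvd := (CharP.cast_eq_zero_iff F (ringChar F) _).1 this
  exact_mod_cast Nat.cast_le.2 (Nat.le_of_dvd hd hdvd)

/-- Cauchy–Davenport over a field: the sumset of `A_1, …, A_n` has at least
`min{p(F), k_1 + ⋯ + k_n - n + 1}` elements; `ringChar F = 0` encodes `p(F)` infinite. -/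
theorem cauchy_davenport_field {F : Type*} [Field F] [DecidableEq F] {n : ℕ}
    (A : Fin n → Finset F) (hA : ∀ j, (A j).Nonempty) :
    (ringChar F = 0 →
      (∑ j, ((A j).card : ℤ)) - n + 1 ≤
        ((Fintype.piFinset A).image fun f => ∑ i, f i).card) ∧
    (ringChar F ≠ 0 →
      min ((ringChar F : ℤ)) ((∑ j, ((A j).card : ℤ)) - n + 1) ≤
        ((Fintype.piFinset A).image fun f => ∑ i, f i).card) := by
  have hkey := key n A hA
  have hsum : n ≤ ∑ j, (A j).card := by
    calc n = ∑ _j : Fin n, 1 := by simp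
      _ ≤ _ := Finset.sum_le_sum fun j _ => (hA j).card_pos
  have hcast : (∑ j, ((A j).card : ℤ)) = ((∑ j, (A j).card : ℕ) : ℤ) := by push_cast; rfl
  rw [hcast]
  set s := ∑ j, (A j).card with hs
  set c := ((Fintype.piFinset A).image fun f => ∑ i, f i).card with hc
  clear_value s c
  clear hcast hs hc
  constructor
  · intro h0
    rw [minOrder_char_zero h0, min_eq_right le_top, Nat.cast_le] at hkey
    clear hA A
    omega
  · intro hp
    have h2 : min ((ringChar F : ℕ∞)) (↑(s + 1 - n)) ≤ (c : ℕ∞) :=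
      le_trans (min_le_min (minOrder_char_ne hp) le_rfl) hkey
    have h3 : min (ringChar F) (s + 1 - n) ≤ c := by
      rcases min_le_iff.1 h2 with h | h
      · exact le_trans (min_le_left _ _) (by exact_mod_cast h)
      · exact le_trans (min_le_right _ _) (by exact_mod_cast h)
    clear hA A hkey h2
    omega
end
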